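/- Let L be a first-order language, M a nonempty L-structure, α and β finite types, and φ an L-formula in the free variables α ⊕ β. Then the following are equivalent: (1) φ has the order property in M, i.e., there exist sequences a : ℕ → (α → M) and b : ℕ → (β → M) such that either (for all m, n: φ(a m, b n) holds iff m < n) or (for all m, n: φ(a m, b n) holds iff n < m); (2) there exist sequences a : ℕ → (α → M) and b : ℕ → (β → M) and real numbers r ≠ s such that, writing χ(m,n) = 1 if φ(a m, b n) holds and 0 otherwise, for every n the limit c(n) = lim_m χ(m,n) exists with lim_n c(n) = r, and for every m the limit d(m) = lim_n χ(m,n) exists with lim_m d(m) = s. Equivalently, φ is stable in M (has no order property in M) if and only if for all such sequences the two iterated limits of χ, whenever both exist, are equal. -/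

import Mathlib

open Filter Topology FirstOrder

private lemma zero_one_limit {f : ℕ → ℝ} (hf : ∀ k, f k = 0 ∨ f k = 1) {x : ℝ}
    (h : Tendsto f atTop (𝓝 x)) : (x = 0 ∨ x = 1) ∧ ∀ᶠ k in atTop, f k = x := by
  have hx : x = 0 ∨ x = 1 := by
    have hcl : IsClosed ({0, 1} : Set ℝ) :=
      (Set.toFinite _).isClosed
    have := hcl.mem_of_tendsto h (Eventually.of_forall fun k => by
      rcases hf k with h1 | h1 <;> simp [h1])
    simpa using this
  have hev : ∀ᶠ k in atTop, |f k - x| < 1/2 := by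
    obtain ⟨N, hN⟩ := (Metric.tendsto_atTop.mp h) (1/2) (by norm_num)
    filter_upwards [eventually_ge_atTop N] with k hk
    simpa [Real.dist_eq] using hN k hk
  refine ⟨hx, ?_⟩
  filter_upwards [hev] with k hk
  rcases hf k with h1 | h1 <;> rcases hx with h2 | h2 <;>
    rw [h1, h2] <;> rw [h1, h2] at hk <;> norm_num at hk

private lemma key {P : ℕ → ℕ → Prop}
    (hA : ∃ N0 : ℕ, ∀ n ≥ N0, ∃ Mn : ℕ, ∀ m ≥ Mn, ¬ P m n)
    (hB : ∃ M0 : ℕ, ∀ m ≥ M0, ∃ Nm : ℕ, ∀ n ≥ Nm, P m n) :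
    ∃ f g : ℕ → ℕ, ∀ i j, P (f i) (g j) ↔ i < j := by
  obtain ⟨N0, hN0⟩ := hA
  obtain ⟨M0, hM0⟩ := hB
  have hA' : ∀ n, ∃ Mn : ℕ, ∀ m ≥ Mn, n ≥ N0 → ¬ P m n := fun n => by
    by_cases h : n ≥ N0
    · obtain ⟨Mn, hMn⟩ := hN0 n h; exact ⟨Mn, fun m hm _ => hMn m hm⟩
    · exact ⟨0, fun m _ hn => absurd hn h⟩
  have hB' : ∀ m, ∃ Nm : ℕ, ∀ n ≥ Nm, m ≥ M0 → P m n := fun m => by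
    by_cases h : m ≥ M0
    · obtain ⟨Nm, hNm⟩ := hM0 m h; exact ⟨Nm, fun n hn _ => hNm n hn⟩
    · exact ⟨0, fun n _ hm => absurd hm h⟩
  choose MM hMM using hA'
  choose NN hNN using hB'
  let F : ℕ → ℕ × ℕ := fun k =>
    Nat.rec ((N0, max M0 (MM N0)) : ℕ × ℕ)
      (fun _ p => (max p.1 (NN p.2), max p.2 (MM (max p.1 (NN p.2))))) k
  set g : ℕ → ℕ := fun k => (F k).1 with hgdef
  set f : ℕ → ℕ := fun k => (F k).2 with hfdef
  have hstep_g : ∀ k, g (k + 1) = max (g k) (NN (f k)) := fun k => rfl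
  have hstep_f : ∀ k, f (k + 1) = max (f k) (MM (g (k + 1))) := fun k => rfl
  have hgmono : Monotone g := monotone_nat_of_le_succ fun k => by
    rw [hstep_g]; exact le_max_left _ _
  have hfmono : Monotone f := monotone_nat_of_le_succ fun k => by
    rw [hstep_f]; exact le_max_left _ _
  have hg0 : ∀ k, N0 ≤ g k := fun k => le_trans (le_refl _) (hgmono (Nat.zero_le k))
  have hf0 : ∀ k, M0 ≤ f k := fun k =>
    le_trans (le_max_left _ _ : M0 ≤ f 0) (hfmono (Nat.zero_le k))
  have hfM : ∀ k, MM (g k) ≤ f k := fun k => by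
    cases k with
    | zero => exact le_max_right _ _
    | succ k => rw [hstep_f]; exact le_max_right _ _
  have hstepNN : ∀ k, NN (f k) ≤ g (k + 1) := fun k => by
    rw [hstep_g]; exact le_max_right _ _
  refine ⟨f, g, fun i j => ?_⟩
  constructor
  · intro hP
    by_contra hle
    push_neg at hle
    exact hMM (g j) (f i) (le_trans (hfM j) (hfmono hle)) (hg0 j) hP
  · intro hij
    have : NN (f i) ≤ g j := le_trans (hstepNN i) (hgmono hij)
    exact hNN (f i) (g j) this (hf0 i)

open Classical in
/-- Translation of stability into Grothendieck's double limit condition: a formula `φ`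
has the order property in a structure `M` iff there are sequences witnessing distinct
iterated limits of the indicator function of `φ`. -/
theorem order_property_iff_double_limit_failure {L : Language} {M : Type*} [L.Structure M]
    [Nonempty M] {α β : Type*} [Finite α] [Finite β]
    (φ : L.Formula (α ⊕ β)) :
    (∃ (a : ℕ → α → M) (b : ℕ → β → M),
        (∀ m n : ℕ, φ.Realize (Sum.elim (a m) (b n)) ↔ m < n) ∨
        (∀ m n : ℕ, φ.Realize (Sum.elim (a m) (b n)) ↔ n < m)) ↔
      (∃ (a : ℕ → α → M) (b : ℕ → β → M) (c d : ℕ → ℝ) (r s : ℝ),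
        r ≠ s ∧
        (∀ n, Tendsto
          (fun m => if φ.Realize (Sum.elim (a m) (b n)) then (1 : ℝ) else 0)
          atTop (𝓝 (c n))) ∧
        Tendsto c atTop (𝓝 r) ∧
        (∀ m, Tendsto
          (fun n => if φ.Realize (Sum.elim (a m) (b n)) then (1 : ℝ) else 0)
          atTop (𝓝 (d m))) ∧
        Tendsto d atTop (𝓝 s)) := by
  constructor
  · rintro ⟨a, b, hab | hab⟩
    · refine ⟨a, b, fun _ => 0, fun _ => 1, 0, 1, by norm_num, ?_, tendsto_const_nhds, ?_,
        tendsto_const_nhds⟩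
      · intro n
        refine Tendsto.congr' ?_ tendsto_const_nhds
        filter_upwards [eventually_ge_atTop n] with m hm
        simp [hab m n, Nat.not_lt.mpr hm]
      · intro m
        refine Tendsto.congr' ?_ tendsto_const_nhds
        filter_upwards [eventually_ge_atTop (m + 1)] with n hn
        simp [hab m n, Nat.lt_of_succ_le hn]
    · refine ⟨a, b, fun _ => 1, fun _ => 0, 1, 0, by norm_num, ?_, tendsto_const_nhds, ?_,
        tendsto_const_nhds⟩
      · intro n
        refine Tendsto.congr' ?_ tendsto_const_nhds
        filter_upwards [eventually_ge_atTop (n + 1)] with m hm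
        simp [hab m n, Nat.lt_of_succ_le hm]
      · intro m
        refine Tendsto.congr' ?_ tendsto_const_nhds
        filter_upwards [eventually_ge_atTop m] with n hn
        simp [hab m n, Nat.not_lt.mpr hn]
  · rintro ⟨a, b, c, d, r, s, hrs, hc, hcr, hd, hds⟩
    set P : ℕ → ℕ → Prop := fun m n => φ.Realize (Sum.elim (a m) (b n)) with hP
    have hind : ∀ m n, (if P m n then (1 : ℝ) else 0) = 0 ∨ (if P m n then (1 : ℝ) else 0) = 1 :=
      fun m n => by split_ifs <;> simp
    have hcn : ∀ n, (c n = 0 ∨ c n = 1) ∧ ∀ᶠ m in atTop, (if P m n then (1 : ℝ) else 0) = c n :=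
      fun n => zero_one_limit (fun m => hind m n) (hc n)
    have hdm : ∀ m, (d m = 0 ∨ d m = 1) ∧ ∀ᶠ n in atTop, (if P m n then (1 : ℝ) else 0) = d m :=
      fun m => zero_one_limit (fun n => hind m n) (hd m)
    have hr : (r = 0 ∨ r = 1) ∧ ∀ᶠ n in atTop, c n = r :=
      zero_one_limit (fun n => (hcn n).1) hcr
    have hs : (s = 0 ∨ s = 1) ∧ ∀ᶠ m in atTop, d m = s :=
      zero_one_limit (fun m => (hdm m).1) hds
    have hcase : (r = 0 ∧ s = 1) ∨ (r = 1 ∧ s = 0) := by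
      rcases hr.1 with h1 | h1 <;> rcases hs.1 with h2 | h2 <;> simp_all
    rcases hcase with ⟨hr0, hs1⟩ | ⟨hr1, hs0⟩
    · -- c → 0, d → 1 : order property with m < n
      have hA : ∃ N0 : ℕ, ∀ n ≥ N0, ∃ Mn : ℕ, ∀ m ≥ Mn, ¬ P m n := by
        obtain ⟨N0, hN0⟩ := eventually_atTop.mp hr.2
        refine ⟨N0, fun n hn => ?_⟩
        obtain ⟨Mn, hMn⟩ := eventually_atTop.mp (hcn n).2
        refine ⟨Mn, fun m hm hPmn => ?_⟩
        have := hMn m hm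
        rw [if_pos hPmn, hN0 n hn, hr0] at this
        norm_num at this
      have hB : ∃ M0 : ℕ, ∀ m ≥ M0, ∃ Nm : ℕ, ∀ n ≥ Nm, P m n := by
        obtain ⟨M0, hM0⟩ := eventually_atTop.mp hs.2
        refine ⟨M0, fun m hm => ?_⟩
        obtain ⟨Nm, hNm⟩ := eventually_atTop.mp (hdm m).2
        refine ⟨Nm, fun n hn => ?_⟩
        have := hNm n hn
        rw [hM0 m hm, hs1] at this
        by_contra hPmn
        rw [if_neg hPmn] at this
        norm_num at this
      obtain ⟨f, g, hfg⟩ := key hA hB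
      exact ⟨a ∘ f, b ∘ g, Or.inl fun i j => hfg i j⟩
    · -- c → 1, d → 0 : order property with n < m
      have hA : ∃ N0 : ℕ, ∀ u ≥ N0, ∃ Mu : ℕ, ∀ v ≥ Mu, ¬ P u v := by
        obtain ⟨N0, hN0⟩ := eventually_atTop.mp hs.2
        refine ⟨N0, fun m hm => ?_⟩
        obtain ⟨Mn, hMn⟩ := eventually_atTop.mp (hdm m).2
        refine ⟨Mn, fun n hn hPmn => ?_⟩
        have := hMn n hn
        rw [if_pos hPmn, hN0 m hm, hs0] at this
        norm_num at this
      have hB : ∃ M0 : ℕ, ∀ v ≥ M0, ∃ Nv : ℕ, ∀ u ≥ Nv, P u v := by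
        obtain ⟨M0, hM0⟩ := eventually_atTop.mp hr.2
        refine ⟨M0, fun n hn => ?_⟩
        obtain ⟨Mn, hMn⟩ := eventually_atTop.mp (hcn n).2
        refine ⟨Mn, fun m hm => ?_⟩
        have := hMn m hm
        rw [hM0 n hn, hr1] at this
        by_contra hPmn
        rw [if_neg hPmn] at this
        norm_num at this
      obtain ⟨f, g, hfg⟩ := key (P := fun x y => P y x) hA hB
      exact ⟨a ∘ g, b ∘ f, Or.inr fun m n => hfg n m⟩
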